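/- arXiv:1709.09246 — 2 statements merged into one kernel-verified Lean document; each statement's English description precedes it below -/
import Mathlib

section
/- Let f : 𝒫 → G be a continuous group homomorphism from 𝒫 = SL(2,ℂ) ⋉ M to a Hausdorff topological group G. Then the following are equivalent: (a) f is injective on some neighbourhood of the identity of 𝒫; (b) the homomorphism M ∋ t ↦ f(I, t) ∈ G is not the trivial homomorphism. Moreover, if (a) and (b) hold, then either f is injective or its kernel is exactly {(I, 0), (−I, 0)}. -/
noncomputable section

/-- SL(2,ℂ). -/
abbrev SL2C := Matrix.SpecialLinearGroup (Fin 2) ℂ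

/-- The additive group of 2×2 self-adjoint complex matrices (Minkowski translations). -/
abbrev HermMat := ↥(selfAdjoint (Matrix (Fin 2) (Fin 2) ℂ))

/-- The matrix topology on SL(2,ℂ). -/
instance : TopologicalSpace SL2C :=
  inferInstanceAs (TopologicalSpace {A : Matrix (Fin 2) (Fin 2) ℂ // A.det = 1})

private lemma conj_selfAdjoint (A : Matrix (Fin 2) (Fin 2) ℂ) (X : HermMat) :
    A * X.val * star A ∈ selfAdjoint (Matrix (Fin 2) (Fin 2) ℂ) := by
  have hX : star X.val = X.val := X.2
  simp only [selfAdjoint.mem_iff]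
  rw [star_mul, star_star, star_mul, hX, ← mul_assoc]

/-- Conjugation X ↦ A X A* as an additive automorphism of the self-adjoint matrices. -/
def conjAct (A : SL2C) : HermMat ≃+ HermMat where
  toFun X := ⟨A.val * X.val * star A.val, conj_selfAdjoint A.val X⟩
  invFun X := ⟨A⁻¹.val * X.val * star A⁻¹.val, conj_selfAdjoint A⁻¹.val X⟩
  left_inv X := by
    apply Subtype.ext
    have h1 : A⁻¹.val * A.val = 1 := by
      rw [← Matrix.SpecialLinearGroup.coe_mul, inv_mul_cancel,
        Matrix.SpecialLinearGroup.coe_one]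
    have h2 : star A.val * star A⁻¹.val = 1 := by
      rw [← star_mul, h1, star_one]
    show A⁻¹.val * (A.val * X.val * star A.val) * star A⁻¹.val = X.val
    calc A⁻¹.val * (A.val * X.val * star A.val) * star A⁻¹.val
        = (A⁻¹.val * A.val) * X.val * (star A.val * star A⁻¹.val) := by
          simp only [mul_assoc]
      _ = X.val := by rw [h1, h2, one_mul, mul_one]
  right_inv X := by
    apply Subtype.ext
    have h1 : A.val * A⁻¹.val = 1 := by
      rw [← Matrix.SpecialLinearGroup.coe_mul, mul_inv_cancel,
        Matrix.SpecialLinearGroup.coe_one]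
    have h2 : star A⁻¹.val * star A.val = 1 := by
      rw [← star_mul, h1, star_one]
    show A.val * (A⁻¹.val * X.val * star A⁻¹.val) * star A.val = X.val
    calc A.val * (A⁻¹.val * X.val * star A⁻¹.val) * star A.val
        = (A.val * A⁻¹.val) * X.val * (star A⁻¹.val * star A.val) := by
          simp only [mul_assoc]
      _ = X.val := by rw [h1, h2, one_mul, mul_one]
  map_add' X Y := by
    apply Subtype.ext
    show A.val * (X.val + Y.val) * star A.val
      = A.val * X.val * star A.val + A.val * Y.val * star A.val
    rw [mul_add, add_mul]

private lemma conjAct_one : conjAct 1 = AddEquiv.refl HermMat := by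
  apply AddEquiv.ext
  intro X
  apply Subtype.ext
  show (1 : SL2C).val * X.val * star (1 : SL2C).val = X.val
  simp

private lemma conjAct_mul (A B : SL2C) :
    conjAct (A * B) = (conjAct B).trans (conjAct A) := by
  apply AddEquiv.ext
  intro X
  apply Subtype.ext
  show (A * B).val * X.val * star (A * B).val
      = A.val * (B.val * X.val * star B.val) * star A.val
  rw [Matrix.SpecialLinearGroup.coe_mul, star_mul]
  simp only [mul_assoc]

/-- The action of SL(2,ℂ) on the translations, as a homomorphism into the automorphism
group of the (multiplicatively written) translation group. -/
def phiAct : SL2C →* MulAut (Multiplicative HermMat) where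
  toFun A := AddEquiv.toMultiplicative (conjAct A)
  map_one' := by
    show AddEquiv.toMultiplicative (conjAct 1) = 1
    rw [conjAct_one]; rfl
  map_mul' A B := by
    show AddEquiv.toMultiplicative (conjAct (A * B))
      = AddEquiv.toMultiplicative (conjAct A) * AddEquiv.toMultiplicative (conjAct B)
    rw [conjAct_mul]; rfl

/-- The universal covering of the proper orthochronous Poincaré group, as the semidirect
product SL(2,ℂ) ⋉ ℝ⁴ (with the translations written multiplicatively). -/
abbrev Poincare := SemidirectProduct (Multiplicative HermMat) SL2C phiAct

/-- The product topology on the Poincaré group. -/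
instance : TopologicalSpace Poincare :=
  TopologicalSpace.induced
    (fun g : Poincare => (g.left, g.right)) instTopologicalSpaceProd

/-- The element −I of SL(2,ℂ). -/
def negOne : SL2C := ⟨-1, by simp [Matrix.det_neg]⟩


/-! ### auxiliary matrix lemmas -/

lemma star_fin_two (a b c d : ℂ) :
    star !![a, b; c, d] = !![star a, star c; star b, star d] := by
  ext i j
  rw [Matrix.star_apply]
  fin_cases i <;> fin_cases j <;> simp

lemma herm_entry (X : HermMat) (i j : Fin 2) : star (X.val j i) = X.val i j := by
  have : star X.val = X.val := X.2
  conv_rhs => rw [← this]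
  rw [Matrix.star_apply]

lemma herm_eta (X : HermMat) :
    X.val = !![X.val 0 0, X.val 0 1; star (X.val 0 1), X.val 1 1] := by
  rw [herm_entry X 1 0]
  exact Matrix.eta_fin_two X.val

/-- a self-adjoint matrix from entries -/
def herm (a : ℂ) (b : ℂ) (c : ℂ) (ha : star a = a) (hc : star c = c) : HermMat :=
  ⟨!![a, b; star b, c], by
    simp only [selfAdjoint.mem_iff, star_fin_two, star_star, ha, hc]⟩

def e11 (r : ℝ) : HermMat :=
  herm (r : ℂ) 0 0 (by simp [Complex.conj_ofReal]) (by simp)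

lemma e11_val (r : ℝ) : (e11 r).val = !![(r:ℂ), 0; 0, 0] := by
  simp [e11, herm]

lemma e11_zero : e11 0 = 0 := by
  apply Subtype.ext
  rw [e11_val]
  ext i j
  fin_cases i <;> fin_cases j <;> simp

lemma e11_neg (r : ℝ) : -e11 r = e11 (-r) := by
  apply Subtype.ext
  show -(e11 r).val = (e11 (-r)).val
  rw [e11_val, e11_val]
  ext i j
  fin_cases i <;> fin_cases j <;> simp

def uppM (z : ℂ) : SL2C := ⟨!![1, z; 0, 1], by simp [Matrix.det_fin_two_of]⟩
def lowM (z : ℂ) : SL2C := ⟨!![1, 0; z, 1], by simp [Matrix.det_fin_two_of]⟩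
def wM : SL2C := ⟨!![0, 1; -1, 0], by simp [Matrix.det_fin_two_of]⟩

lemma conjAct_val (A : SL2C) (X : HermMat) :
    (conjAct A X).val = A.val * X.val * star A.val := rfl

/-! ### the spreading argument -/

section Spread

variable {P : HermMat → Prop}
  (hadd : ∀ X Y, P X → P Y → P (X + Y))
  (hneg : ∀ X, P X → P (-X))
  (hconj : ∀ (A : SL2C) (X : HermMat), P X → P (conjAct A X))

include hadd hneg hconj

lemma upp_move (z : ℂ) (X : HermMat) (hX : P X) :
    P ⟨!![z * star (X.val 0 1) + star z * X.val 0 1 + z * star z * X.val 1 1,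
          z * X.val 1 1; star z * X.val 1 1, 0],
       by
        simp only [selfAdjoint.mem_iff, star_fin_two, star_star, star_add, star_mul',
          star_zero, herm_entry X 1 1]
        ring_nf⟩ := by
  have h := hadd _ _ (hconj (uppM z) X hX) (hneg X hX)
  convert h using 1
  apply Subtype.ext
  show _ = (conjAct (uppM z) X).val + -(X.val)
  rw [conjAct_val]
  show _ = (uppM z).val * X.val * star (uppM z).val + -(X.val)
  show _ = !![1, z; 0, 1] * X.val * star !![1, z; 0, 1] + -(X.val)
  ext i j
  fin_cases i <;> fin_cases j <;>
    simp [Matrix.mul_apply, Fin.sum_univ_two, Matrix.star_apply, -Matrix.cons_mul, herm_entry,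
      Matrix.add_apply, Matrix.neg_apply] <;> ring

lemma stepA (X : HermMat) (hX : P X) (hc : X.val 1 1 ≠ 0) (r : ℝ) : P (e11 r) := by
  set c := (X.val 1 1).re with hcdef
  have hre : (c : ℂ) = X.val 1 1 := Complex.conj_eq_iff_re.mp (herm_entry X 1 1)
  have hrene : c ≠ 0 := by
    intro h; apply hc; rw [← hre, h]; simp
  have key : ∀ z : ℂ, P (e11 (2 * Complex.normSq z * c)) := by
    intro z
    have h := hadd _ _ (upp_move hadd hneg hconj z X hX) (upp_move hadd hneg hconj (-z) X hX)
    convert h using 1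
    apply Subtype.ext
    show (e11 _).val = _ + _
    rw [e11_val]
    ext i j
    fin_cases i <;> fin_cases j <;>
      simp [Matrix.add_apply, ← hre, Complex.normSq_eq_conj_mul_self] <;>
      push_cast <;> ring
  have key2 : ∀ s : ℝ, 0 ≤ s → P (e11 (s * c)) := by
    intro s hs
    have := key ((Real.sqrt (s / 2) : ℝ) : ℂ)
    rwa [Complex.normSq_ofReal, Real.mul_self_sqrt (by linarith),
      show 2 * (s / 2) = s by ring] at this
  rcases le_or_gt 0 (r / c) with h | h
  · have := key2 _ h
    rwa [div_mul_cancel₀ r hrene] at this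
  · have h' : 0 ≤ (-r) / c := by
      rw [neg_div]; linarith
    have := hneg _ (key2 _ h')
    rwa [div_mul_cancel₀ (-r) hrene, e11_neg, neg_neg] at this

lemma stepB (X : HermMat) (hX : P X) (hc : X.val 1 1 = 0) (hb : X.val 0 1 ≠ 0)
    (r : ℝ) : P (e11 r) := by
  set b := X.val 0 1 with hbdef
  have hb2 : Complex.normSq b ≠ 0 := by simpa using hb
  set z : ℂ := ((r / (2 * Complex.normSq b) : ℝ) : ℂ) * b with hzdef
  have h := upp_move hadd hneg hconj z X hX
  convert h using 1
  apply Subtype.ext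
  rw [e11_val]
  ext i j
  fin_cases i <;> fin_cases j <;>
    simp [hc, hzdef, ← hbdef, star_mul', Complex.conj_ofReal]
  have hbb : b * (starRingEnd ℂ) b = (Complex.normSq b : ℂ) := Complex.mul_conj b
  have hbb' : (starRingEnd ℂ) b * b = (Complex.normSq b : ℂ) := by
    rw [mul_comm]; exact hbb
  rw [mul_assoc, hbb, mul_assoc, hbb']
  have : (Complex.normSq b : ℂ) ≠ 0 := by exact_mod_cast hb2
  field_simp
  ring

lemma stepC (X : HermMat) (hX : P X) (hc : X.val 1 1 = 0) (hb : X.val 0 1 = 0)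
    (ha : X.val 0 0 ≠ 0) (r : ℝ) : P (e11 r) := by
  have hY := hconj (lowM 1) X hX
  apply stepA hadd hneg hconj _ hY _ r
  -- (2,2) entry of the conjugate is X00 ≠ 0
  rw [conjAct_val]
  show (!![(1:ℂ), 0; 1, 1] * X.val * star !![(1:ℂ), 0; 1, 1]) 1 1 ≠ 0
  have hb' : X.val 1 0 = 0 := by rw [← herm_entry X 1 0, hb, star_zero]
  simpa [Matrix.mul_apply, Fin.sum_univ_two, Matrix.star_apply, -Matrix.cons_mul,
    hb, hb', hc] using ha

lemma step_e11 (X : HermMat) (hX : P X) (hXne : X ≠ 0) (r : ℝ) : P (e11 r) := by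
  by_cases hc : X.val 1 1 ≠ 0
  · exact stepA hadd hneg hconj X hX hc r
  push_neg at hc
  by_cases hb : X.val 0 1 ≠ 0
  · exact stepB hadd hneg hconj X hX hc hb r
  push_neg at hb
  by_cases ha : X.val 0 0 ≠ 0
  · exact stepC hadd hneg hconj X hX hc hb ha r
  push_neg at ha
  exfalso
  apply hXne
  apply Subtype.ext
  rw [herm_eta X, ha, hb, hc]
  ext i j
  fin_cases i <;> fin_cases j <;> simp

lemma spread (X : HermMat) (hX : P X) (hXne : X ≠ 0) (Y : HermMat) : P Y := by
  have h11 : ∀ r : ℝ, P (e11 r) := step_e11 hadd hneg hconj X hX hXne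
  have conj_e11 : ∀ (A : SL2C) (r : ℝ) (Z : HermMat),
      Z.val = A.val * (e11 r).val * star A.val → P Z := by
    intro A r Z hZ
    have := hconj A _ (h11 r)
    convert this using 1
    exact Subtype.ext (by rw [hZ, conjAct_val])
  -- e22
  have h22 : ∀ r : ℝ, P ⟨!![0, 0; 0, (r:ℂ)], by
      simp [selfAdjoint.mem_iff, star_fin_two, Complex.conj_ofReal]⟩ := by
    intro r
    apply conj_e11 wM r
    show _ = !![(0:ℂ), 1; -1, 0] * (e11 r).val * star !![(0:ℂ), 1; -1, 0]
    ext i j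
    fin_cases i <;> fin_cases j <;>
      simp [Matrix.mul_apply, Fin.sum_univ_two, Matrix.star_apply, -Matrix.cons_mul, e11_val]
  -- ones matrix
  have hS : ∀ r : ℝ, P ⟨!![(r:ℂ), (r:ℂ); (r:ℂ), (r:ℂ)], by
      simp [selfAdjoint.mem_iff, star_fin_two, Complex.conj_ofReal]⟩ := by
    intro r
    apply conj_e11 (lowM 1) r
    show _ = !![(1:ℂ), 0; 1, 1] * (e11 r).val * star !![(1:ℂ), 0; 1, 1]
    ext i j
    fin_cases i <;> fin_cases j <;>
      simp [Matrix.mul_apply, Fin.sum_univ_two, Matrix.star_apply, -Matrix.cons_mul, e11_val]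
  -- the matrix !![r, -r i; r i, r]
  have hT : ∀ r : ℝ, P ⟨!![(r:ℂ), -(r * Complex.I); (r * Complex.I), (r:ℂ)], by
      rw [selfAdjoint.mem_iff]
      ext i j
      fin_cases i <;> fin_cases j <;>
        simp [Matrix.star_apply, Complex.conj_ofReal, Complex.conj_I] <;> ring⟩ := by
    intro r
    apply conj_e11 (lowM Complex.I) r
    show _ = !![(1:ℂ), 0; Complex.I, 1] * (e11 r).val * star !![(1:ℂ), 0; Complex.I, 1]
    ext i j
    fin_cases i <;> fin_cases j <;>
      simp [Matrix.mul_apply, Fin.sum_univ_two, Matrix.star_apply, -Matrix.cons_mul, e11_val,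
        Complex.conj_I] <;> ring_nf <;> simp [Complex.I_sq] <;> ring
  -- decompose Y
  set α : ℝ := (Y.val 0 1).re with hα
  set β : ℝ := -(Y.val 0 1).im with hβ
  set γ : ℝ := (Y.val 0 0).re - α - β with hγ
  set δ : ℝ := (Y.val 1 1).re - α - β with hδ
  have h := hadd _ _ (hadd _ _ (hS α) (hT β)) (hadd _ _ (h11 γ) (h22 δ))
  convert h using 1
  apply Subtype.ext
  show Y.val = _ + _
  have him00 : (Y.val 0 0).im = 0 := Complex.conj_eq_iff_im.mp (herm_entry Y 0 0)
  have him11 : (Y.val 1 1).im = 0 := Complex.conj_eq_iff_im.mp (herm_entry Y 1 1)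
  have hY10 : Y.val 1 0 = star (Y.val 0 1) := (herm_entry Y 1 0).symm
  ext i j
  fin_cases i <;> fin_cases j <;>
    (apply Complex.ext <;>
       simp [Matrix.add_apply, e11_val, hY10, hα, hβ, hγ, hδ, him00, him11]) <;>
    try ring

end Spread


/-! ### kernel characterization -/

section Kernel

variable {G : Type*} [Group G]

lemma phiAct_ofAdd (A : SL2C) (X : HermMat) :
    phiAct A (Multiplicative.ofAdd X) = Multiplicative.ofAdd (conjAct A X) := rfl

lemma comm_elt (g : Poincare) (s : Multiplicative HermMat) :
    SemidirectProduct.inl s * g * (SemidirectProduct.inl s)⁻¹ * g⁻¹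
      = SemidirectProduct.inl (s * (phiAct g.right s)⁻¹) := by
  have hconj : g * (SemidirectProduct.inl s)⁻¹ * g⁻¹
      = SemidirectProduct.inl ((phiAct g.right) s⁻¹) := by
    conv_lhs => rw [← SemidirectProduct.inl_left_mul_inr_right g]
    rw [← map_inv, mul_inv_rev, ← map_inv, ← map_inv]
    calc SemidirectProduct.inl g.left * SemidirectProduct.inr g.right
          * SemidirectProduct.inl s⁻¹
          * (SemidirectProduct.inr g.right⁻¹ * SemidirectProduct.inl g.left⁻¹)
        = SemidirectProduct.inl g.left
          * (SemidirectProduct.inr g.right * SemidirectProduct.inl s⁻¹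
              * SemidirectProduct.inr g.right⁻¹)
          * SemidirectProduct.inl g.left⁻¹ := by group
      _ = SemidirectProduct.inl g.left
          * SemidirectProduct.inl ((phiAct g.right) s⁻¹)
          * SemidirectProduct.inl g.left⁻¹ := by rw [← SemidirectProduct.inl_aut]
      _ = SemidirectProduct.inl (g.left * (phiAct g.right) s⁻¹ * g.left⁻¹) := by
          rw [← map_mul, ← map_mul]
      _ = SemidirectProduct.inl ((phiAct g.right) s⁻¹) := by
          rw [mul_comm g.left, mul_assoc, mul_inv_cancel, mul_one]
  rw [mul_assoc (SemidirectProduct.inl s) g, mul_assoc (SemidirectProduct.inl s),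
    hconj, ← map_mul, map_inv]

lemma conjAct_fix_scalar (A : SL2C) (h : ∀ X : HermMat, conjAct A X = X) :
    A = 1 ∨ A = negOne := by
  have hm : ∀ X : HermMat, A.val * X.val * star A.val = X.val :=
    fun X => congrArg Subtype.val (h X)
  have hE := hm (e11 1)
  rw [e11_val] at hE
  have hS := hm ⟨!![0, 1; 1, 0], by
    rw [selfAdjoint.mem_iff]
    ext i j
    fin_cases i <;> fin_cases j <;> simp [Matrix.star_apply]⟩
  -- star A.val * A.val = 1
  have h1 : A.val * star A.val = 1 := by
    have := hm ⟨1, by simp [selfAdjoint.mem_iff]⟩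
    simpa using this
  have h1' : star A.val * A.val = 1 := mul_eq_one_comm.mp h1
  -- commutation
  have hcomm : ∀ X : HermMat, A.val * X.val = X.val * A.val := by
    intro X
    have := congrArg (fun M => M * A.val) (hm X)
    simpa [mul_assoc, h1'] using this
  have hcE := hcomm (e11 1)
  rw [e11_val] at hcE
  have hcS := hcomm ⟨!![0, 1; 1, 0], by
    rw [selfAdjoint.mem_iff]
    ext i j
    fin_cases i <;> fin_cases j <;> simp [Matrix.star_apply]⟩
  have e01 : A.val 0 1 = 0 := by
    have := congrFun (congrFun hcE 0) 1
    simpa [Matrix.mul_apply, Fin.sum_univ_two, -Matrix.cons_mul] using this.symm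
  have e10 : A.val 1 0 = 0 := by
    have := congrFun (congrFun hcE 1) 0
    simpa [Matrix.mul_apply, Fin.sum_univ_two, -Matrix.cons_mul] using this
  have ediag : A.val 0 0 = A.val 1 1 := by
    have := congrFun (congrFun hcS 0) 1
    simpa [Matrix.mul_apply, Fin.sum_univ_two, -Matrix.cons_mul, e01, e10] using this
  have hdet : A.val 0 0 * A.val 0 0 = 1 := by
    have := A.2
    rw [Matrix.det_fin_two, e01, e10, ediag] at this
    simpa [ediag] using this
  have : (A.val 0 0 - 1) * (A.val 0 0 + 1) = 0 := by ring_nf; linear_combination hdet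
  rcases mul_eq_zero.mp this with h00 | h00
  · left
    apply Subtype.ext
    have h00' : A.val 0 0 = 1 := by linear_combination h00
    ext i j
    fin_cases i <;> fin_cases j <;>
      simp [e01, e10, h00', ← ediag, Matrix.one_apply]
  · right
    apply Subtype.ext
    have h00' : A.val 0 0 = -1 := by linear_combination h00
    show A.val = (-1 : Matrix (Fin 2) (Fin 2) ℂ)
    ext i j
    fin_cases i <;> fin_cases j <;>
      simp [e01, e10, h00', ← ediag, Matrix.one_apply]

lemma ker_characterization (f : Poincare →* G)
    (ht : ∃ t : Multiplicative HermMat, f (SemidirectProduct.inl t) ≠ 1) :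
    (∀ X : HermMat, f (SemidirectProduct.inl (Multiplicative.ofAdd X)) = 1 → X = 0) ∧
    (∀ g : Poincare, f g = 1 → g = 1 ∨ g = SemidirectProduct.inr negOne) := by
  set P : HermMat → Prop :=
    fun X => f (SemidirectProduct.inl (Multiplicative.ofAdd X)) = 1 with hP
  have hadd : ∀ X Y, P X → P Y → P (X + Y) := by
    intro X Y hX hY
    show f (SemidirectProduct.inl (Multiplicative.ofAdd (X + Y))) = 1
    rw [show Multiplicative.ofAdd (X + Y)
        = Multiplicative.ofAdd X * Multiplicative.ofAdd Y from rfl, map_mul, map_mul,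
      hX, hY, one_mul]
  have hneg : ∀ X, P X → P (-X) := by
    intro X hX
    show f (SemidirectProduct.inl (Multiplicative.ofAdd (-X))) = 1
    rw [show Multiplicative.ofAdd (-X) = (Multiplicative.ofAdd X)⁻¹ from rfl, map_inv,
      map_inv, hX, inv_one]
  have hconj : ∀ (A : SL2C) (X : HermMat), P X → P (conjAct A X) := by
    intro A X hX
    show f (SemidirectProduct.inl (Multiplicative.ofAdd (conjAct A X))) = 1
    rw [← phiAct_ofAdd, SemidirectProduct.inl_aut, map_mul, map_mul, hX, mul_one]
    simp
  have hker0 : ∀ X : HermMat, P X → X = 0 := by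
    intro X hX
    by_contra hXne
    obtain ⟨t, htne⟩ := ht
    exact htne (spread hadd hneg hconj X hX hXne (Multiplicative.toAdd t))
  refine ⟨hker0, ?_⟩
  intro g hg
  -- every commutator with a translation is in the kernel
  have hfix : ∀ X : HermMat, conjAct g.right X = X := by
    intro X
    set s : Multiplicative HermMat := Multiplicative.ofAdd X with hs
    have hfc : f (SemidirectProduct.inl (s * (phiAct g.right s)⁻¹)) = 1 := by
      rw [← comm_elt]
      rw [map_mul, map_mul, map_mul, map_inv, map_inv, hg, inv_one, mul_one, mul_one]
      simp
    have := hker0 (X + -(conjAct g.right X)) hfc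
    have h2 : X = conjAct g.right X := by
      have h3 := congrArg (fun Y => Y + conjAct g.right X) this
      simpa [add_assoc] using h3
    exact h2.symm
  rcases conjAct_fix_scalar g.right hfix with hA | hA
  · left
    have hgl : g = SemidirectProduct.inl g.left := by
      rw [← SemidirectProduct.inl_left_mul_inr_right g, hA]
      simp
    rw [hgl] at hg ⊢
    have h0 := hker0 (Multiplicative.toAdd g.left)
      (by show f (SemidirectProduct.inl (Multiplicative.ofAdd (Multiplicative.toAdd g.left))) = 1; exact hg)
    have hgl1 : g.left = 1 := by
      have := congrArg Multiplicative.ofAdd h0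
      simpa using this
    rw [hgl1, map_one]
  · right
    -- g² is a translation in the kernel
    have hsq : g * g = SemidirectProduct.inl (g.left * g.left) := by
      apply SemidirectProduct.ext
      · rw [SemidirectProduct.mul_left, SemidirectProduct.left_inl, hA]
        congr 1
        show (phiAct negOne) g.left = g.left
        have : conjAct negOne (Multiplicative.toAdd g.left) = Multiplicative.toAdd g.left := by
          apply Subtype.ext
          show negOne.val * _ * star negOne.val = _
          show (-1 : Matrix (Fin 2) (Fin 2) ℂ) * _ * star (-1 : Matrix (Fin 2) (Fin 2) ℂ) = _
          simp
        exact this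
      · rw [SemidirectProduct.mul_right, SemidirectProduct.right_inl, hA]
        apply Subtype.ext
        show (-1 : Matrix (Fin 2) (Fin 2) ℂ) * (-1) = 1
        simp
    have hfsq : f (SemidirectProduct.inl (g.left * g.left)) = 1 := by
      rw [← hsq, map_mul, hg, one_mul]
    have h0 := hker0 (Multiplicative.toAdd g.left + Multiplicative.toAdd g.left)
      (by show f (SemidirectProduct.inl (g.left * g.left)) = 1; exact hfsq)
    have hgl1 : g.left = 1 := by
      have h1 : Multiplicative.toAdd g.left = 0 := by
        apply Subtype.ext
        have h2 : (Multiplicative.toAdd g.left).val + (Multiplicative.toAdd g.left).val = 0 :=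
          congrArg Subtype.val h0
        ext i j
        have h3 := congrFun (congrFun h2 i) j
        rw [Matrix.add_apply] at h3
        simpa using add_self_eq_zero.mp h3
      have := congrArg Multiplicative.ofAdd h1
      simpa using this
    rw [← SemidirectProduct.inl_left_mul_inr_right g, hgl1, map_one, one_mul, hA]

end Kernel

/-! ### topology -/

lemma continuous_reEntry :
    Continuous (fun g : Poincare => ((g.right.val : Matrix (Fin 2) (Fin 2) ℂ) 0 0).re) := by
  have h1 : Continuous (fun g : Poincare => (g.left, g.right)) := continuous_induced_dom
  have h2 : Continuous (fun g : Poincare => g.right) := h1.snd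
  have h3 : Continuous (fun g : Poincare => (g.right.val : Matrix (Fin 2) (Fin 2) ℂ)) :=
    continuous_subtype_val.comp h2
  have h4 : Continuous (fun g : Poincare => g.right.val 0 0) :=
    (continuous_apply (0 : Fin 2)).comp ((continuous_apply (0 : Fin 2)).comp h3)
  exact Complex.continuous_re.comp h4

lemma continuous_transl :
    Continuous (fun r : ℝ =>
      (SemidirectProduct.inl (Multiplicative.ofAdd (e11 r)) : Poincare)) := by
  apply continuous_induced_rng.2
  have hval : Continuous (fun r : ℝ => (e11 r).val) := by
    apply continuous_pi
    intro i
    apply continuous_pi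
    intro j
    fin_cases i <;> fin_cases j <;> simp [e11_val] <;>
      first
      | exact Complex.continuous_ofReal
      | exact continuous_const
  have hherm : Continuous (fun r : ℝ => (e11 r : HermMat)) := hval.subtype_mk _
  have hmul : Continuous (fun r : ℝ => (Multiplicative.ofAdd (e11 r))) :=
    continuous_ofAdd.comp hherm
  have heq : (fun g : Poincare => (g.left, g.right)) ∘
      (fun r : ℝ => (SemidirectProduct.inl (Multiplicative.ofAdd (e11 r)) : Poincare))
      = fun r : ℝ => ((Multiplicative.ofAdd (e11 r)), (1 : SL2C)) := by
    funext r
    simp [Function.comp]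
  rw [heq]
  exact hmul.prodMk continuous_const


/-- For a continuous homomorphism f from the (covering of the) Poincaré group to a
Hausdorff topological group G, local injectivity at the identity is equivalent to the
nontriviality of the restriction of f to the spacetime translations; in that case either
f is injective or its kernel is exactly {(I,0), (−I,0)}. -/
theorem poincare_local_faithfulness
    {G : Type*} [Group G] [TopologicalSpace G] [IsTopologicalGroup G] [T2Space G]
    (f : Poincare →* G) (hf : Continuous f) :
    ((∃ U ∈ nhds (1 : Poincare), Set.InjOn f U) ↔
      ∃ t : Multiplicative HermMat, f (SemidirectProduct.inl t) ≠ 1) ∧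
    ((∃ U ∈ nhds (1 : Poincare), Set.InjOn f U) →
      Function.Injective f ∨
        (f.ker : Set Poincare) = {1, SemidirectProduct.inr negOne}) := by
  -- forward direction
  have hmp : (∃ U ∈ nhds (1 : Poincare), Set.InjOn f U) →
      ∃ t : Multiplicative HermMat, f (SemidirectProduct.inl t) ≠ 1 := by
    rintro ⟨U, hU, hinj⟩
    by_contra h
    push_neg at h
    set c : ℝ → Poincare :=
      fun r => SemidirectProduct.inl (Multiplicative.ofAdd (e11 r)) with hc
    have hc0 : c 0 = 1 := by
      rw [hc]
      simp only [e11_zero]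
      rw [show Multiplicative.ofAdd (0 : HermMat) = 1 from rfl, map_one]
    have htend : Filter.Tendsto c (nhds 0) (nhds (1 : Poincare)) := by
      have h' := continuous_transl.tendsto 0
      rw [show (SemidirectProduct.inl (Multiplicative.ofAdd (e11 0)) : Poincare) = 1
        from hc0] at h'
      exact h'
    have h2 : c ⁻¹' U ∈ nhds (0 : ℝ) := htend hU
    have h3 : (c ⁻¹' U ∩ {(0 : ℝ)}ᶜ) ∈ nhdsWithin (0 : ℝ) {(0 : ℝ)}ᶜ :=
      Filter.inter_mem (nhdsWithin_le_nhds h2) self_mem_nhdsWithin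
    obtain ⟨r, hrU, hr0'⟩ := Filter.nonempty_of_mem h3
    have hr0 : r ≠ 0 := hr0'
    have hcr : c r = 1 := by
      apply hinj hrU (mem_of_mem_nhds hU)
      rw [map_one]
      exact h _
    have : e11 r = 0 := by
      have h4 := congrArg SemidirectProduct.left hcr
      rw [hc] at h4
      simp only [SemidirectProduct.left_inl] at h4
      have h5 := congrArg Multiplicative.toAdd h4
      simpa using h5
    have h6 := congrArg Subtype.val this
    rw [e11_val] at h6
    have h7 := congrFun (congrFun h6 0) 0
    simp at h7
    exact hr0 h7
  refine ⟨⟨hmp, ?_⟩, ?_⟩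
  · -- reverse direction: nontrivial on translations implies local injectivity
    rintro ⟨t, ht⟩
    refine ⟨(fun g : Poincare => ((g.right.val : Matrix (Fin 2) (Fin 2) ℂ) 0 0).re) ⁻¹'
      Set.Ioi 0, ?_, ?_⟩
    · apply (continuous_reEntry.isOpen_preimage _ isOpen_Ioi).mem_nhds
      show (0 : ℝ) < (((1 : Poincare).right.val : Matrix (Fin 2) (Fin 2) ℂ) 0 0).re
      rw [show ((1 : Poincare).right : SL2C) = 1 from rfl]
      simp [Matrix.one_apply]
    · intro x hx y hy hxy
      have hker : f (y⁻¹ * x) = 1 := by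
        rw [map_mul, map_inv, hxy, inv_mul_cancel]
      rcases (ker_characterization f ⟨t, ht⟩).2 _ hker with h1 | h1
      · exact (inv_mul_eq_one.mp h1).symm
      · exfalso
        have hxval : x = y * SemidirectProduct.inr negOne := by
          rw [← h1, ← mul_assoc, mul_inv_cancel, one_mul]
        have hxy' : x.right = y.right * negOne := by
          rw [hxval, SemidirectProduct.mul_right, SemidirectProduct.right_inr]
        have hentry : (x.right.val : Matrix (Fin 2) (Fin 2) ℂ) 0 0
            = -((y.right.val : Matrix (Fin 2) (Fin 2) ℂ) 0 0) := by
          rw [hxy']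
          rw [show ((y.right * negOne : SL2C) : Matrix (Fin 2) (Fin 2) ℂ)
            = y.right.val * (-1) from rfl]
          simp
        simp only [Set.mem_preimage, Set.mem_Ioi] at hx hy
        rw [hentry] at hx
        simp at hx
        linarith
  · -- the moreover part
    intro hloc
    obtain ⟨t, ht⟩ := hmp hloc
    have hker := (ker_characterization f ⟨t, ht⟩).2
    by_cases hn : f (SemidirectProduct.inr negOne) = 1
    · right
      ext g
      simp only [SetLike.mem_coe, MonoidHom.mem_ker, Set.mem_insert_iff,
        Set.mem_singleton_iff]
      constructor
      · intro hg
        exact hker g hg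
      · rintro (rfl | rfl)
        · exact map_one f
        · exact hn
    · left
      rw [← MonoidHom.ker_eq_bot_iff]
      rw [Subgroup.eq_bot_iff_forall]
      intro g hg
      rcases hker g (MonoidHom.mem_ker.mp hg) with h1 | h1
      · exact h1
      · exact absurd (h1 ▸ MonoidHom.mem_ker.mp hg) hn
end
end

section
/- Every closed normal subgroup of 𝒫 = SL(2,ℂ) ⋉ M is one of the following five subgroups: the trivial subgroup {(I, 0)}; the centre {(I, 0), (−I, 0)}; the translation subgroup {(I, t) : t ∈ M}; the subgroup {(±I, t) : t ∈ M}; or 𝒫 itself. -/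
noncomputable section

open Matrix SemidirectProduct Complex

namespace PP

local notation "M2" => Matrix (Fin 2) (Fin 2) ℂ

@[simp] lemma conjAct_val (A : SL2C) (X : HermMat) :
    (conjAct A X).val = A.val * X.val * star A.val := rfl

@[simp] lemma phiAct_apply (A : SL2C) (t : HermMat) :
    phiAct A (Multiplicative.ofAdd t) = Multiplicative.ofAdd (conjAct A t) := rfl

lemma herm_ext {s t : HermMat} (h : ∀ i j, s.val i j = t.val i j) : s = t :=
  Subtype.ext (Matrix.ext h)

/-- rank-one selfadjoint c • w w* -/
def rk (c : ℝ) (w : Fin 2 → ℂ) : HermMat :=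
  ⟨(c : ℂ) • Matrix.vecMulVec w (star w), by
    simp only [selfAdjoint.mem_iff]
    ext i j
    simp [Matrix.star_eq_conjTranspose, Matrix.conjTranspose_apply, Matrix.vecMulVec_apply,
      Pi.star_apply, mul_comm]⟩

@[simp] lemma rk_val (c : ℝ) (w : Fin 2 → ℂ) (i j : Fin 2) :
    (rk c w).val i j = (c : ℂ) * (w i * (starRingEnd ℂ) (w j)) := by
  simp [rk, Matrix.vecMulVec_apply, Pi.star_apply]

lemma rk_conj (A : SL2C) (c : ℝ) (w : Fin 2 → ℂ) :
    conjAct A (rk c w) = rk c (A.val *ᵥ w) := by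
  apply herm_ext
  intro i j
  simp [Matrix.mul_apply, Fin.sum_univ_two, Matrix.mulVec, dotProduct,
    Matrix.star_eq_conjTranspose, Matrix.conjTranspose_apply, _root_.map_add, _root_.map_mul]
  fin_cases i <;> fin_cases j <;> simp <;> ring

end PP
namespace PP

lemma rk_zero (w : Fin 2 → ℂ) : rk 0 w = 0 := by
  apply herm_ext; intro i j
  simp

lemma rk_neg (c : ℝ) (w : Fin 2 → ℂ) : rk (-c) w = -(rk c w) := by
  apply herm_ext; intro i j
  show _ = -((rk c w).val) i j
  push_cast [rk_val]
  ring

lemma rk_smul (c s : ℝ) (w : Fin 2 → ℂ) : rk c ((s : ℂ) • w) = rk (c * s ^ 2) w := by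
  apply herm_ext; intro i j
  simp [Complex.conj_ofReal]
  push_cast
  ring

/-- any nonzero vector is the image of e₁ under some SL(2,ℂ) element -/
lemma exists_col (v : Fin 2 → ℂ) (hv : v ≠ 0) :
    ∃ A : SL2C, A.val *ᵥ ![1, 0] = v := by
  by_cases h0 : v 0 ≠ 0
  · refine ⟨⟨!![v 0, 0; v 1, (v 0)⁻¹], by rw [Matrix.det_fin_two_of]; field_simp; ring⟩, ?_⟩
    funext i
    fin_cases i <;> simp [Matrix.mulVec, dotProduct, Fin.sum_univ_two]
  · push_neg at h0
    have h1 : v 1 ≠ 0 := by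
      intro h1
      apply hv; funext i; fin_cases i <;> simp [h0, h1]
    refine ⟨⟨!![v 0, -(v 1)⁻¹; v 1, 0], by rw [Matrix.det_fin_two_of]; field_simp; ring⟩, ?_⟩
    funext i
    fin_cases i <;> simp [Matrix.mulVec, dotProduct, Fin.sum_univ_two]

/-- from one rank-one lightlike generator, all scaled rank ones -/
lemma rk_all (T : AddSubgroup HermMat)
    (hconj : ∀ (A : SL2C) t, t ∈ T → conjAct A t ∈ T)
    (c : ℝ) (hc : c ≠ 0) (hmem : rk c ![1, 0] ∈ T) :
    ∀ (r : ℝ) (w : Fin 2 → ℂ), rk r w ∈ T := by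
  intro r w
  rcases eq_or_ne r 0 with hr | hr
  · rw [hr, rk_zero]; exact T.zero_mem
  rcases eq_or_ne w 0 with hw | hw
  · have : rk r w = 0 := by apply herm_ext; intro i j; simp [hw]
    rw [this]; exact T.zero_mem
  -- key: for any s ≠ 0 real, rk (c * s^2) w ∈ T
  have key : ∀ s : ℝ, s ≠ 0 → rk (c * s ^ 2) w ∈ T := by
    intro s hs
    have hsw : (s : ℂ) • w ≠ 0 := by
      simp [smul_eq_zero, hw, Complex.ofReal_eq_zero, hs]
    obtain ⟨A, hA⟩ := exists_col _ hsw
    have := hconj A _ hmem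
    rwa [rk_conj, hA, rk_smul] at this
  rcases lt_or_gt_of_ne (div_ne_zero hr hc) with hneg | hpos
  · -- r/c < 0
    have h1 : Real.sqrt (-(r / c)) ≠ 0 := Real.sqrt_ne_zero'.mpr (by linarith)
    have h2 : c * (Real.sqrt (-(r / c))) ^ 2 = -r := by
      rw [Real.sq_sqrt (by linarith)]
      field_simp
    have := key _ h1
    rw [h2] at this
    have := T.neg_mem this
    rwa [← rk_neg, neg_neg] at this
  · have h1 : Real.sqrt (r / c) ≠ 0 := Real.sqrt_ne_zero'.mpr hpos
    have h2 : c * (Real.sqrt (r / c)) ^ 2 = r := by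
      rw [Real.sq_sqrt hpos.le]
      field_simp
    have := key _ h1
    rwa [h2] at this

end PP
namespace PP

def shE (x : ℂ) : SL2C := ⟨!![1, x; 0, 1], by simp [Matrix.det_fin_two_of]⟩
def shF (x : ℂ) : SL2C := ⟨!![1, 0; x, 1], by simp [Matrix.det_fin_two_of]⟩

@[simp] lemma shE_val (x : ℂ) : (shE x).val = !![1, x; 0, 1] := rfl
@[simp] lemma shF_val (x : ℂ) : (shF x).val = !![1, 0; x, 1] := rfl

/-- Selfadjointness relations for entries. -/
lemma herm_rel (t : HermMat) (i j : Fin 2) :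
    (starRingEnd ℂ) (t.val j i) = t.val i j := by
  have := t.2
  rw [selfAdjoint.mem_iff, Matrix.star_eq_conjTranspose] at this
  conv_rhs => rw [← this]
  simp [Matrix.conjTranspose_apply]

/-- Decomposition of a selfadjoint matrix into four scaled rank-ones. -/
lemma herm_decomp (t : HermMat) :
    t = rk (t.val 0 0).re ![1, 0] + rk (t.val 1 1).re ![0, 1]
        + rk (1/2) ![t.val 0 1, 1] + rk (-(1/2)) ![t.val 0 1, -1] := by
  have h00 : ((t.val 0 0).re : ℂ) = t.val 0 0 :=
    Complex.conj_eq_iff_re.mp (herm_rel t 0 0)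
  have h11 : ((t.val 1 1).re : ℂ) = t.val 1 1 :=
    Complex.conj_eq_iff_re.mp (herm_rel t 1 1)
  have h10 : (starRingEnd ℂ) (t.val 0 1) = t.val 1 0 := herm_rel t 1 0
  apply herm_ext
  intro i j
  show t.val i j = ((rk _ _).val + (rk _ _).val + (rk _ _).val + (rk _ _).val) i j
  fin_cases i <;> fin_cases j <;> simp [h00, h11, h10] <;> ring

/-- The invariant nonzero element gives a lightlike generator. -/
lemma exists_lightlike (T : AddSubgroup HermMat)
    (hconj : ∀ (A : SL2C) t, t ∈ T → conjAct A t ∈ T)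
    (t : HermMat) (ht : t ∈ T) (hne : t ≠ 0) :
    ∃ c : ℝ, c ≠ 0 ∧ rk c ![1, 0] ∈ T := by
  have h01 : (starRingEnd ℂ) (t.val 1 0) = t.val 0 1 := herm_rel t 0 1
  have h10 : (starRingEnd ℂ) (t.val 0 1) = t.val 1 0 := herm_rel t 1 0
  have h00 : ((t.val 0 0).re : ℂ) = t.val 0 0 := Complex.conj_eq_iff_re.mp (herm_rel t 0 0)
  have h11 : ((t.val 1 1).re : ℂ) = t.val 1 1 := Complex.conj_eq_iff_re.mp (herm_rel t 1 1)
  by_cases hb : t.val 1 1 = 0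
  · by_cases hz : t.val 0 1 = 0
    · -- t is already diag(a,0)
      have ha : t.val 0 0 ≠ 0 := by
        intro ha
        apply hne
        apply herm_ext
        intro i j
        fin_cases i <;> fin_cases j <;>
          simp only [ZeroMemClass.coe_zero, Matrix.zero_apply]
        · exact ha
        · exact hz
        · show t.val 1 0 = 0
          rw [← h10, hz, map_zero]
        · exact hb
      refine ⟨(t.val 0 0).re, fun h => ha (by rw [← h00, h]; simp), ?_⟩
      have : rk (t.val 0 0).re ![1, 0] = t := by
        apply herm_ext
        intro i j
        fin_cases i <;> fin_cases j <;> simp [h00, hz, hb]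
        show (0 : ℂ) = t.val 1 0
        rw [← h10, hz, map_zero]
      rwa [this]
    · -- b = 0, z ≠ 0
      refine ⟨2 * Complex.normSq (t.val 0 1), by
        simp [Complex.normSq_eq_zero, hz], ?_⟩
      have key : rk (2 * Complex.normSq (t.val 0 1)) ![1, 0]
          = conjAct (shE (t.val 0 1)) t - t := by
        apply herm_ext
        intro i j
        have : ((Complex.normSq (t.val 0 1) : ℂ)) = t.val 0 1 * (starRingEnd ℂ) (t.val 0 1) := by
          rw [Complex.mul_conj]
        fin_cases i <;> fin_cases j <;>
          simp [Matrix.mul_apply, Matrix.vecMul, dotProduct, Fin.sum_univ_two,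
            Matrix.star_eq_conjTranspose, Matrix.conjTranspose_apply, hb, this] <;>
          linear_combination (t.val 0 1) * h10
      rw [key]
      exact T.sub_mem (hconj _ _ ht) ht
  · -- b ≠ 0
    have hre : (t.val 1 1).re ≠ 0 := by
      intro h
      exact hb (by rw [← h11, h, Complex.ofReal_zero])
    refine ⟨2 * (t.val 1 1).re, by simpa using hre, ?_⟩
    have key : rk (2 * (t.val 1 1).re) ![1, 0]
        = (conjAct (shE 1) t + conjAct (shE (-1)) t) - (t + t) := by
      apply herm_ext
      intro i j
      fin_cases i <;> fin_cases j <;>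
        simp [Matrix.mul_apply, Matrix.vecMul, dotProduct, Fin.sum_univ_two,
          Matrix.star_eq_conjTranspose, Matrix.conjTranspose_apply, h11] <;>
        ring
    rw [key]
    exact T.sub_mem (T.add_mem (hconj _ _ ht) (hconj _ _ ht)) (T.add_mem ht ht)


lemma hermGen (T : AddSubgroup HermMat)
    (hconj : ∀ (A : SL2C) t, t ∈ T → conjAct A t ∈ T)
    (t₀ : HermMat) (h0 : t₀ ∈ T) (hne : t₀ ≠ 0) : ∀ t, t ∈ T := by
  obtain ⟨c, hc, hmem⟩ := exists_lightlike T hconj t₀ h0 hne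
  intro t
  rw [herm_decomp t]
  exact T.add_mem (T.add_mem (T.add_mem (rk_all T hconj c hc hmem _ _)
    (rk_all T hconj c hc hmem _ _)) (rk_all T hconj c hc hmem _ _))
    (rk_all T hconj c hc hmem _ _)

end PP
namespace PP

@[simp] lemma negOne_val : (negOne).val = (-1 : Matrix (Fin 2) (Fin 2) ℂ) := rfl

lemma negOne_mul_self : negOne * negOne = 1 := by
  apply Subtype.ext
  simp [Matrix.SpecialLinearGroup.coe_mul]

lemma negOne_ne_one : negOne ≠ 1 := by
  intro h
  have := congrFun (congrFun (congrArg Subtype.val h) 0) 0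
  simp [Matrix.SpecialLinearGroup.coe_one] at this
  norm_num at this

lemma negOne_comm (B : SL2C) : negOne * B = B * negOne := by
  apply Subtype.ext
  simp [Matrix.SpecialLinearGroup.coe_mul]

@[simp] lemma shE_zero : shE 0 = 1 := by
  apply Subtype.ext
  simp [Matrix.SpecialLinearGroup.coe_one]
  ext i j; fin_cases i <;> fin_cases j <;> simp [Matrix.one_apply]

lemma shE_mul (x y : ℂ) : shE x * shE y = shE (x + y) := by
  apply Subtype.ext
  ext i j
  fin_cases i <;> fin_cases j <;>
    (simp [Matrix.SpecialLinearGroup.coe_mul, Matrix.mul_apply, Fin.sum_univ_two]; try ring)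

def dSL (μ : ℂ) (h : μ ≠ 0) : SL2C :=
  ⟨!![μ, 0; 0, μ⁻¹], by rw [Matrix.det_fin_two_of]; field_simp; ring⟩

lemma dSL_conj (μ : ℂ) (h : μ ≠ 0) (x : ℂ) :
    (dSL μ h) * shE x * (dSL μ h)⁻¹ = shE (μ ^ 2 * x) := by
  apply Subtype.ext
  rw [Matrix.SpecialLinearGroup.coe_mul, Matrix.SpecialLinearGroup.coe_mul,
    Matrix.SpecialLinearGroup.coe_inv]
  show (dSL μ h).val * (shE x).val * Matrix.adjugate (dSL μ h).val = _
  rw [show (dSL μ h).val = !![μ, 0; 0, μ⁻¹] from rfl, Matrix.adjugate_fin_two]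
  ext i j
  fin_cases i <;> fin_cases j <;>
    (simp [Matrix.mul_apply, Fin.sum_univ_two]; try field_simp; try ring)

lemma shE_inv (x : ℂ) : (shE x)⁻¹ = shE (-x) := by
  apply inv_eq_of_mul_eq_one_right
  rw [shE_mul, add_neg_cancel, shE_zero]

/-- From one nontrivial elementary matrix in a normal subgroup, get all of them. -/
lemma shE_all (H : Subgroup SL2C) (b : ℂ) (hb : b ≠ 0) (hmem : shE b ∈ H)
    (hconj : ∀ x ∈ H, ∀ g : SL2C, g * x * g⁻¹ ∈ H) :
    ∀ x : ℂ, shE x ∈ H := by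
  have key : ∀ μ : ℂ, μ ≠ 0 → shE (μ ^ 2 * b) ∈ H := by
    intro μ hμ
    rw [← dSL_conj μ hμ b]
    exact hconj _ hmem _
  intro x
  rcases eq_or_ne x 0 with rfl | hx
  · rw [shE_zero]; exact H.one_mem
  by_cases h1 : x / b + 1 = 0
  · obtain ⟨μ, hμ⟩ := IsAlgClosed.exists_pow_nat_eq (k := ℂ) (x / b + 2 ^ 2) zero_lt_two
    have hμ0 : μ ≠ 0 := by
      intro h0
      rw [h0] at hμ
      have hxb : x / b = -(2:ℂ)^2 := by linear_combination -hμ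
      rw [hxb] at h1
      norm_num at h1
    have e : μ ^ 2 * b + -(2 ^ 2 * b) = x := by
      field_simp at hμ
      linear_combination hμ
    have := H.mul_mem (key μ hμ0) (H.inv_mem (key 2 two_ne_zero))
    rwa [shE_inv, shE_mul, e] at this
  · obtain ⟨μ, hμ⟩ := IsAlgClosed.exists_pow_nat_eq (k := ℂ) (x / b + 1 ^ 2) zero_lt_two
    have hμ0 : μ ≠ 0 := by
      intro h0
      rw [h0] at hμ
      rw [show x / b + 1 ^ 2 = x / b + 1 by ring] at hμ
      norm_num at hμ
      exact h1 hμ.symm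
    have e : μ ^ 2 * b + -(1 ^ 2 * b) = x := by
      field_simp at hμ
      linear_combination hμ
    have := H.mul_mem (key μ hμ0) (H.inv_mem (key 1 one_ne_zero))
    rwa [shE_inv, shE_mul, e] at this

end PP
namespace PP

def wSL : SL2C := ⟨!![0, -1; 1, 0], by simp [Matrix.det_fin_two_of]⟩

lemma shF_eq_conj (x : ℂ) : shF x = wSL * shE (-x) * wSL⁻¹ := by
  apply Subtype.ext
  rw [Matrix.SpecialLinearGroup.coe_mul, Matrix.SpecialLinearGroup.coe_mul,
    Matrix.SpecialLinearGroup.coe_inv,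
    show (wSL).val = !![0, -1; 1, 0] from rfl, Matrix.adjugate_fin_two]
  ext i j
  fin_cases i <;> fin_cases j <;>
    simp [Matrix.mul_apply, Fin.sum_univ_two]

/-- transvections generate SL(2,C) -/
lemma gen_top (H : Subgroup SL2C) (hE : ∀ x : ℂ, shE x ∈ H) (hF : ∀ x : ℂ, shF x ∈ H) :
    H = ⊤ := by
  have key : ∀ g : SL2C, g.val 1 0 ≠ 0 → g ∈ H := by
    intro g hc
    have hdet : g.val 0 0 * g.val 1 1 - g.val 0 1 * g.val 1 0 = 1 := by
      rw [← Matrix.det_fin_two]; exact g.2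
    have hg : g = shE ((g.val 0 0 - 1) / g.val 1 0) * shF (g.val 1 0)
        * shE ((g.val 1 1 - 1) / g.val 1 0) := by
      apply Subtype.ext
      rw [Matrix.SpecialLinearGroup.coe_mul, Matrix.SpecialLinearGroup.coe_mul]
      ext i j
      fin_cases i <;> fin_cases j <;>
        (simp [Matrix.mul_apply, Fin.sum_univ_two]; try field_simp; try ring) <;>
        (first | linear_combination hdet | linear_combination -hdet
               | linear_combination 2*hdet | linear_combination -2*hdet)
    rw [hg]
    exact H.mul_mem (H.mul_mem (hE _) (hF _)) (hE _)
  rw [Subgroup.eq_top_iff']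
  intro g
  by_cases hc : g.val 1 0 ≠ 0
  · exact key g hc
  push_neg at hc
  have hdet : g.val 0 0 * g.val 1 1 - g.val 0 1 * g.val 1 0 = 1 := by
    rw [← Matrix.det_fin_two]; exact g.2
  have hd : g.val 1 1 ≠ 0 := by
    intro h
    rw [hc, h] at hdet
    norm_num at hdet
  have h2 : (g * shF 1).val 1 0 ≠ 0 := by
    have : (g * shF 1).val 1 0 = g.val 1 0 + g.val 1 1 := by
      rw [Matrix.SpecialLinearGroup.coe_mul]
      simp [Matrix.mul_apply, Fin.sum_univ_two]
    rw [this, hc, zero_add]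
    exact hd
  have := H.mul_mem (key _ h2) (H.inv_mem (hF 1))
  rwa [mul_assoc, mul_inv_cancel, mul_one] at this

/-- upper triangular noncentral element gives everything -/
lemma tri_case (H : Subgroup SL2C)
    (hconj : ∀ x ∈ H, ∀ g : SL2C, g * x * g⁻¹ ∈ H)
    (A : SL2C) (hA : A ∈ H) (h1 : A ≠ 1) (h2 : A ≠ negOne)
    (hc : A.val 1 0 = 0) : ∀ x : ℂ, shE x ∈ H := by
  have hdet : A.val 0 0 * A.val 1 1 - A.val 0 1 * A.val 1 0 = 1 := by
    rw [← Matrix.det_fin_two]; exact A.2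
  have had : A.val 0 0 * A.val 1 1 = 1 := by rw [hc] at hdet; linear_combination hdet
  have ha0 : A.val 0 0 ≠ 0 := fun h => by rw [h, zero_mul] at had; norm_num at had
  by_cases ha2 : A.val 0 0 ^ 2 = 1
  · -- a = ±1
    have : (A.val 0 0 - 1) * (A.val 0 0 + 1) = 0 := by linear_combination ha2
    rcases mul_eq_zero.mp this with h | h
    · -- a = 1, d = 1, A = shE b with b ≠ 0
      have ha : A.val 0 0 = 1 := by linear_combination h
      have hd : A.val 1 1 = 1 := by rw [ha, one_mul] at had; exact had
      have hb : A.val 0 1 ≠ 0 := by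
        intro hb
        apply h1
        apply Subtype.ext
        ext i j
        fin_cases i <;> fin_cases j <;>
          simp [Matrix.SpecialLinearGroup.coe_one, Matrix.one_apply, ha, hb, hc, hd]
      have : A = shE (A.val 0 1) := by
        apply Subtype.ext
        ext i j
        fin_cases i <;> fin_cases j <;> simp [ha, hc, hd]
      exact shE_all H _ hb (this ▸ hA) hconj
    · -- a = -1, d = -1, A² = shE (-2b) with b ≠ 0
      have ha : A.val 0 0 = -1 := by linear_combination h
      have hd : A.val 1 1 = -1 := by
        rw [ha] at had; linear_combination -had
      have hb : A.val 0 1 ≠ 0 := by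
        intro hb
        apply h2
        apply Subtype.ext
        ext i j
        fin_cases i <;> fin_cases j <;>
          simp [Matrix.one_apply, ha, hb, hc, hd]
      have hsq : A * A = shE (-2 * A.val 0 1) := by
        apply Subtype.ext
        rw [Matrix.SpecialLinearGroup.coe_mul]
        ext i j
        fin_cases i <;> fin_cases j <;>
          (simp [Matrix.mul_apply, Fin.sum_univ_two, ha, hc, hd]; try ring)
      have : shE (-2 * A.val 0 1) ∈ H := hsq ▸ H.mul_mem hA hA
      exact shE_all H _ (by simp [hb]) this hconj
  · -- a² ≠ 1 : commutator [A, shE 1] = shE (a² - 1)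
    have hcomm : A * shE 1 * A⁻¹ * (shE 1)⁻¹ = shE (A.val 0 0 ^ 2 - 1) := by
      rw [shE_inv]
      apply Subtype.ext
      rw [Matrix.SpecialLinearGroup.coe_mul, Matrix.SpecialLinearGroup.coe_mul,
        Matrix.SpecialLinearGroup.coe_mul, Matrix.SpecialLinearGroup.coe_inv,
        Matrix.adjugate_fin_two]
      ext i j
      fin_cases i <;> fin_cases j <;>
        (simp [Matrix.mul_apply, Fin.sum_univ_two, hc]; try ring) <;>
        (first | linear_combination had | linear_combination -had
               | linear_combination (A.val 0 0 ^ 2 - 1) * had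
               | linear_combination (1 - A.val 0 0 ^ 2) * had)
    have hmem : shE (A.val 0 0 ^ 2 - 1) ∈ H := by
      rw [← hcomm]
      have : A * (shE 1 * A⁻¹ * (shE 1)⁻¹) ∈ H :=
        H.mul_mem hA (hconj _ (H.inv_mem hA) (shE 1))
      convert this using 1
      group
    exact shE_all H _ (sub_ne_zero.mpr ha2) hmem hconj

end PP
namespace PP

lemma noncentral_top (H : Subgroup SL2C)
    (hconj : ∀ x ∈ H, ∀ g : SL2C, g * x * g⁻¹ ∈ H)
    (A : SL2C) (hA : A ∈ H) (h1 : A ≠ 1) (h2 : A ≠ negOne) : H = ⊤ := by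
  -- first reduce to triangular case
  suffices htri : ∃ B ∈ H, B ≠ 1 ∧ B ≠ negOne ∧ B.val 1 0 = 0 by
    obtain ⟨B, hB, hB1, hB2, hBc⟩ := htri
    have hE := tri_case H hconj B hB hB1 hB2 hBc
    have hF : ∀ x : ℂ, shF x ∈ H := by
      intro x
      rw [shF_eq_conj]
      exact hconj _ (hE (-x)) wSL
    exact gen_top H hE hF
  by_cases hc : A.val 1 0 = 0
  · exact ⟨A, hA, h1, h2, hc⟩
  -- c ≠ 0 : conjugate to triangular form using an eigenvector
  set a := A.val 0 0 with ha
  set b := A.val 0 1 with hb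
  set c := A.val 1 0 with hcdef
  set d := A.val 1 1 with hd
  have hdet : a * d - b * c = 1 := by
    rw [← Matrix.det_fin_two]; exact A.2
  obtain ⟨s, hs⟩ := IsAlgClosed.exists_pow_nat_eq (k := ℂ) ((a + d) ^ 2 - 4) zero_lt_two
  set lam := ((a + d) + s) / 2 with hlam
  have hquad : lam ^ 2 - (a + d) * lam + 1 = 0 := by
    rw [hlam]
    linear_combination hs / 4
  have hP : (Matrix.det !![lam - d, -c⁻¹; c, 0] : ℂ) = 1 := by
    rw [Matrix.det_fin_two_of]
    field_simp
    ring
  set P : SL2C := ⟨!![lam - d, -c⁻¹; c, 0], hP⟩ with hPdef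
  set B := P⁻¹ * A * P with hB
  have hBH : B ∈ H := by
    have := hconj A hA P⁻¹
    rwa [inv_inv] at this
  refine ⟨B, hBH, ?_, ?_, ?_⟩
  · intro h
    apply h1
    have : P * B * P⁻¹ = A := by rw [hB]; group
    rw [h, mul_one, mul_inv_cancel] at this
    exact this.symm
  · intro h
    apply h2
    have : P * B * P⁻¹ = A := by rw [hB]; group
    rw [h, ← negOne_comm, mul_assoc, mul_inv_cancel, mul_one] at this
    exact this.symm
  · -- the entry computation
    have hBval : B.val = Matrix.adjugate P.val * A.val * P.val := by
      rw [hB, Matrix.SpecialLinearGroup.coe_mul, Matrix.SpecialLinearGroup.coe_mul,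
        Matrix.SpecialLinearGroup.coe_inv]
    rw [hBval, hPdef, Matrix.adjugate_fin_two]
    simp only [Matrix.mul_apply, Fin.sum_univ_two]
    simp
    linear_combination c * hquad + c * hdet
  
end PP
namespace PP

open SemidirectProduct

def transSub (N : Subgroup Poincare) : AddSubgroup HermMat where
  carrier := {t | SemidirectProduct.inl (Multiplicative.ofAdd t) ∈ N}
  zero_mem' := by
    have : (SemidirectProduct.inl (Multiplicative.ofAdd (0 : HermMat)) : Poincare) = 1 := by
      simp
    simp only [Set.mem_setOf_eq, this]
    exact N.one_mem
  add_mem' := by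
    intro a b ha hb
    have := N.mul_mem ha hb
    rwa [← _root_.map_mul, ← ofAdd_add] at this
  neg_mem' := by
    intro a ha
    have := N.inv_mem ha
    rwa [← _root_.map_inv, ← ofAdd_neg] at this

lemma transSub_mem {N : Subgroup Poincare} {t : HermMat} :
    t ∈ transSub N ↔ (SemidirectProduct.inl (Multiplicative.ofAdd t) : Poincare) ∈ N :=
  Iff.rfl

lemma transSub_conj (N : Subgroup Poincare) (hnormal : N.Normal) :
    ∀ (A : SL2C) t, t ∈ transSub N → conjAct A t ∈ transSub N := by
  intro A t ht
  have h := hnormal.conj_mem _ ht (SemidirectProduct.inr A)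
  rw [← map_inv, ← SemidirectProduct.inl_aut] at h
  exact h

lemma comm_mem (N : Subgroup Poincare) (hnormal : N.Normal)
    (n : Poincare) (hn : n ∈ N) (u : HermMat) :
    (u - conjAct n.right u) ∈ transSub N := by
  have hmem : (SemidirectProduct.inl (Multiplicative.ofAdd u) * n
      * (SemidirectProduct.inl (Multiplicative.ofAdd u))⁻¹) * n⁻¹ ∈ N :=
    N.mul_mem (hnormal.conj_mem n hn _) (N.inv_mem hn)
  have e : (SemidirectProduct.inl (Multiplicative.ofAdd u) * n
      * (SemidirectProduct.inl (Multiplicative.ofAdd u))⁻¹) * n⁻¹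
      = SemidirectProduct.inl (Multiplicative.ofAdd (u - conjAct n.right u)) := by
    apply SemidirectProduct.ext
    · simp [sub_eq_add_neg, mul_comm, mul_assoc, mul_left_comm]
    · simp [div_eq_mul_inv]
  rwa [e] at hmem

/-- if A acts trivially on all selfadjoint matrices then A = ±1 -/
lemma central_of_fixes (A : SL2C) (h : ∀ u : HermMat, conjAct A u = u) :
    A = 1 ∨ A = negOne := by
  have hsaE : (!![1, 0; 0, 0] : Matrix (Fin 2) (Fin 2) ℂ) ∈ selfAdjoint (Matrix (Fin 2) (Fin 2) ℂ) := by
    rw [selfAdjoint.mem_iff, Matrix.star_eq_conjTranspose]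
    ext i j
    fin_cases i <;> fin_cases j <;> simp [Matrix.conjTranspose_apply]
  have hsaX : (!![0, 1; 1, 0] : Matrix (Fin 2) (Fin 2) ℂ) ∈ selfAdjoint (Matrix (Fin 2) (Fin 2) ℂ) := by
    rw [selfAdjoint.mem_iff, Matrix.star_eq_conjTranspose]
    ext i j
    fin_cases i <;> fin_cases j <;> simp [Matrix.conjTranspose_apply]
  have hsaY : (!![0, Complex.I; -Complex.I, 0] : Matrix (Fin 2) (Fin 2) ℂ) ∈ selfAdjoint (Matrix (Fin 2) (Fin 2) ℂ) := by
    rw [selfAdjoint.mem_iff, Matrix.star_eq_conjTranspose]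
    ext i j
    fin_cases i <;> fin_cases j <;> simp [Matrix.conjTranspose_apply]
  have key : ∀ (m : Matrix (Fin 2) (Fin 2) ℂ) (hm : m ∈ selfAdjoint (Matrix (Fin 2) (Fin 2) ℂ)) (i j : Fin 2),
      (A.val * m * star A.val) i j = m i j := by
    intro m hm i j
    have := congrArg Subtype.val (h ⟨m, hm⟩)
    exact congrFun (congrFun this i) j
  have hdet : A.val 0 0 * A.val 1 1 - A.val 0 1 * A.val 1 0 = 1 := by
    rw [← Matrix.det_fin_two]; exact A.2
  have hc : A.val 1 0 = 0 := by
    have h0 := key _ hsaE 1 1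
    simp [Matrix.mul_apply, Fin.sum_univ_two, Matrix.star_eq_conjTranspose,
      Matrix.conjTranspose_apply] at h0
    first | exact h0 | linear_combination h0 | linear_combination -h0
  have hE00 : A.val 0 0 * (starRingEnd ℂ) (A.val 0 0) = 1 := by
    have h0 := key _ hsaE 0 0
    simp [Matrix.mul_apply, Fin.sum_univ_two, Matrix.star_eq_conjTranspose,
      Matrix.conjTranspose_apply] at h0
    first | exact h0 | linear_combination h0 | linear_combination -h0
  have ha0 : A.val 0 0 ≠ 0 := by
    intro h'
    rw [h', zero_mul] at hE00
    norm_num at hE00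
  have hX00 : A.val 0 1 * (starRingEnd ℂ) (A.val 0 0) + A.val 0 0 * (starRingEnd ℂ) (A.val 0 1) = 0 := by
    have h0 := key _ hsaX 0 0
    simp [Matrix.mul_apply, Fin.sum_univ_two, Matrix.star_eq_conjTranspose,
      Matrix.conjTranspose_apply, hc] at h0
    first | exact h0 | linear_combination h0 | linear_combination -h0
  have hY00 : Complex.I * (A.val 0 0 * (starRingEnd ℂ) (A.val 0 1))
      - Complex.I * (A.val 0 1 * (starRingEnd ℂ) (A.val 0 0)) = 0 := by
    have h0 := key _ hsaY 0 0
    simp [Matrix.mul_apply, Fin.sum_univ_two, Matrix.star_eq_conjTranspose,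
      Matrix.conjTranspose_apply, hc] at h0
    first | exact h0 | linear_combination h0 | linear_combination -h0
  have hab : A.val 0 0 * (starRingEnd ℂ) (A.val 0 1) = 0 := by
    have h4 : Complex.I * (A.val 0 0 * (starRingEnd ℂ) (A.val 0 1)) = 0 := by
      linear_combination (1/2 : ℂ) * hY00 + (Complex.I/2) * hX00
    rcases mul_eq_zero.mp h4 with h' | h'
    · exact absurd h' Complex.I_ne_zero
    · exact h'
  have hb0 : A.val 0 1 = 0 := by
    rcases mul_eq_zero.mp hab with h' | h'
    · exact absurd h' ha0
    · simpa using congrArg (starRingEnd ℂ) h'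
  have hX01 : A.val 0 0 * (starRingEnd ℂ) (A.val 1 1) = 1 := by
    have h0 := key _ hsaX 0 1
    simp [Matrix.mul_apply, Fin.sum_univ_two, Matrix.star_eq_conjTranspose,
      Matrix.conjTranspose_apply, hc, hb0] at h0
    first | exact h0 | linear_combination h0 | linear_combination -h0
  have hda : A.val 1 1 = A.val 0 0 := by
    have h1 : (starRingEnd ℂ) (A.val 1 1) = (starRingEnd ℂ) (A.val 0 0) :=
      mul_left_cancel₀ ha0 (hX01.trans hE00.symm)
    simpa using congrArg (starRingEnd ℂ) h1
  have ha2 : A.val 0 0 * A.val 0 0 = 1 := by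
    rw [hda, hb0, hc] at hdet
    linear_combination hdet
  have hfact : (A.val 0 0 - 1) * (A.val 0 0 + 1) = 0 := by linear_combination ha2
  rcases mul_eq_zero.mp hfact with h' | h'
  · left
    apply Subtype.ext
    have ha1 : A.val 0 0 = 1 := by linear_combination h'
    ext i j
    fin_cases i <;> fin_cases j <;>
      simp [Matrix.SpecialLinearGroup.coe_one, Matrix.one_apply, ha1, hb0, hc, hda]
  · right
    apply Subtype.ext
    have ha1 : A.val 0 0 = -1 := by linear_combination h'
    ext i j
    fin_cases i <;> fin_cases j <;> simp [ha1, hb0, hc, hda]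

lemma exists_moved (A : SL2C) (h1 : A ≠ 1) (h2 : A ≠ negOne) :
    ∃ u : HermMat, conjAct A u ≠ u := by
  by_contra h
  push_neg at h
  rcases central_of_fixes A h with h | h
  · exact h1 h
  · exact h2 h

end PP
namespace PP

lemma conjAct_negOne (t : HermMat) : conjAct negOne t = t := by
  apply herm_ext
  intro i j
  show ((negOne.val : Matrix (Fin 2) (Fin 2) ℂ) * t.val * star negOne.val) i j = _
  rw [negOne_val]
  simp

lemma herm_half (t : HermMat) (h : t + t = 0) : t = 0 := by
  have hv := congrArg Subtype.val h
  apply herm_ext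
  intro i j
  have h2 : t.val i j + t.val i j = 0 := by
    have e0 : (t.val + t.val) i j = (0 : Matrix (Fin 2) (Fin 2) ℂ) i j := by
      rw [show t.val + t.val = ((t + t : HermMat) : Matrix (Fin 2) (Fin 2) ℂ) from rfl, hv]
      rfl
    simpa [Matrix.add_apply] using e0
  have : t.val i j = 0 := by linear_combination h2 / 2
  simpa using this

end PP

open PP SemidirectProduct in
theorem poincare_closed_normal_subgroups'
    (N : Subgroup Poincare) (hclosed : IsClosed (N : Set Poincare)) (hnormal : N.Normal) :
    N = ⊥ ∨
    (N : Set Poincare) = {1, SemidirectProduct.inr negOne} ∨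
    (N : Set Poincare) = {g : Poincare | g.right = 1} ∨
    (N : Set Poincare) = {g : Poincare | g.right = 1 ∨ g.right = negOne} ∨
    N = ⊤ := by
  classical
  -- helper : elements with right-component 1 are translations in N
  have hmem_inl : ∀ m : Poincare, m.right = 1 → m = inl m.left := by
    intro m hm
    apply SemidirectProduct.ext
    · rfl
    · rw [hm, right_inl]
  have hinr_extract : ∀ m : Poincare, m ∈ N → Multiplicative.toAdd m.left ∈ transSub N →
      inr m.right ∈ N := by
    intro m hm hl
    have hl' : inl m.left ∈ N := hl
    have e : (inl m.left)⁻¹ * m = inr m.right := by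
      apply SemidirectProduct.ext <;> simp
    have := N.mul_mem (N.inv_mem hl') hm
    rwa [e] at this
  by_cases hC : ∃ n ∈ N, n.right ≠ 1 ∧ n.right ≠ negOne
  · -- noncentral rotation part : N = ⊤
    right; right; right; right
    obtain ⟨n, hn, hr1, hr2⟩ := hC
    obtain ⟨u, hu⟩ := exists_moved n.right hr1 hr2
    have h1 : (u - conjAct n.right u) ∈ transSub N := comm_mem N hnormal n hn u
    have hne : u - conjAct n.right u ≠ 0 := sub_ne_zero.mpr fun e => hu e.symm
    have hall : ∀ t, t ∈ transSub N := hermGen _ (transSub_conj N hnormal) _ h1 hne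
    have hinl : ∀ l : Multiplicative HermMat, (inl l : Poincare) ∈ N := fun l =>
      hall (Multiplicative.toAdd l)
    set HS : Subgroup SL2C := Subgroup.comap (inr : SL2C →* Poincare) N with hHS
    have hconjH : ∀ x ∈ HS, ∀ g : SL2C, g * x * g⁻¹ ∈ HS := by
      intro x hx g
      show inr (g * x * g⁻¹) ∈ N
      rw [_root_.map_mul, _root_.map_mul, _root_.map_inv]
      exact hnormal.conj_mem _ hx (inr g)
    have hAH : n.right ∈ HS := hinr_extract n hn (hall _)
    have htop : HS = ⊤ := noncentral_top HS hconjH n.right hAH hr1 hr2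
    rw [Subgroup.eq_top_iff']
    intro g
    have hg2 : inr g.right ∈ N := by
      have : g.right ∈ HS := htop ▸ Subgroup.mem_top g.right
      exact this
    have := N.mul_mem (hinl g.left) hg2
    rwa [inl_left_mul_inr_right] at this
  · push_neg at hC
    by_cases hT : ∃ t : HermMat, t ≠ 0 ∧ t ∈ transSub N
    · obtain ⟨t0, ht0, htm⟩ := hT
      have hall : ∀ t, t ∈ transSub N := hermGen _ (transSub_conj N hnormal) _ htm ht0
      have hinl : ∀ l : Multiplicative HermMat, (inl l : Poincare) ∈ N := fun l =>
        hall (Multiplicative.toAdd l)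
      by_cases hneg : ∃ n ∈ N, n.right = negOne
      · right; right; right; left
        obtain ⟨n, hnN, hnr⟩ := hneg
        have hinrneg : (inr negOne : Poincare) ∈ N := by
          have := hinr_extract n hnN (hall _)
          rwa [hnr] at this
        apply Set.Subset.antisymm
        · intro g hg
          by_cases h1 : g.right = 1
          · exact Or.inl h1
          · exact Or.inr (hC g hg h1)
        · intro g hg
          rcases hg with h1 | h1
          · rw [hmem_inl g h1]
            exact hinl g.left
          · have : g = inl g.left * inr negOne := by
              conv_lhs => rw [← inl_left_mul_inr_right g]
              rw [h1]
            rw [this]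
            exact N.mul_mem (hinl g.left) hinrneg
      · right; right; left
        push_neg at hneg
        apply Set.Subset.antisymm
        · intro g hg
          by_contra h1
          exact hneg g hg (hC g hg h1)
        · intro g hg
          rw [hmem_inl g hg]
          exact hinl g.left
    · push_neg at hT
      have htriv : ∀ t : HermMat, t ∈ transSub N → t = 0 := by
        intro t ht
        by_contra h
        exact hT t h ht
      have hone : ∀ m : Poincare, m ∈ N → m.right = 1 → m = 1 := by
        intro m hm hr
        have hm' : inl m.left ∈ N := by rw [← hmem_inl m hr]; exact hm
        have : Multiplicative.toAdd m.left = 0 := htriv _ hm'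
        have hl : m.left = 1 := by
          simpa using congrArg Multiplicative.ofAdd this
        rw [hmem_inl m hr, hl, _root_.map_one]
      by_cases hneg : ∃ n ∈ N, n.right = negOne
      · right; left
        obtain ⟨n, hnN, hnr⟩ := hneg
        -- n² is a translation, so n.left is trivial
        have hsq : n * n ∈ N := N.mul_mem hnN hnN
        have hsqr : (n * n).right = 1 := by
          rw [mul_right, hnr, negOne_mul_self]
        have hsq1 : n * n = 1 := hone _ hsq hsqr
        have hll : n.left * n.left = 1 := by
          have := congrArg SemidirectProduct.left hsq1
          rw [mul_left, hnr] at this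
          have e : phiAct negOne n.left = n.left := by
            have : phiAct negOne n.left
                = Multiplicative.ofAdd (conjAct negOne (Multiplicative.toAdd n.left)) := rfl
            rw [this, conjAct_negOne]
            rfl
          rwa [e] at this
        have hl0 : n.left = 1 := by
          have : Multiplicative.toAdd n.left + Multiplicative.toAdd n.left = 0 := by
            simpa using congrArg Multiplicative.toAdd hll
          have := herm_half _ this
          simpa using congrArg Multiplicative.ofAdd this
        have hn_eq : n = inr negOne := by
          apply SemidirectProduct.ext
          · rw [hl0, left_inr]
          · rw [hnr, right_inr]
        apply Set.Subset.antisymm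
        · intro g hg
          by_cases h1 : g.right = 1
          · left
            exact hone g hg h1
          · right
            have h2 : g.right = negOne := hC g hg h1
            have : g * (inr negOne)⁻¹ ∈ N := N.mul_mem hg (N.inv_mem (hn_eq ▸ hnN))
            have hr : (g * (inr negOne)⁻¹).right = 1 := by
              rw [mul_right, inv_right, right_inr, h2, mul_inv_cancel]
            have := hone _ this hr
            have : g = inr negOne := by
              have e := congrArg (· * (inr negOne : Poincare)) this
              simpa [mul_assoc] using e
            exact this
        · intro g hg
          rcases hg with h1 | h1
          · rw [h1]; exact N.one_mem
          · rw [h1]; exact hn_eq ▸ hnN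
      · left
        push_neg at hneg
        rw [Subgroup.eq_bot_iff_forall]
        intro m hm
        by_cases h1 : m.right = 1
        · exact hone m hm h1
        · exact absurd (hC m hm h1) (hneg m hm)
/-- Every closed normal subgroup of the (covering of the) Poincaré group is one of:
the trivial subgroup, the centre {(I,0),(−I,0)}, the translation subgroup,
the subgroup {(±I,t)}, or the whole group. -/
theorem poincare_closed_normal_subgroups
    (N : Subgroup Poincare) (hclosed : IsClosed (N : Set Poincare)) (hnormal : N.Normal) :
    N = ⊥ ∨
    (N : Set Poincare) = {1, SemidirectProduct.inr negOne} ∨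
    (N : Set Poincare) = {g : Poincare | g.right = 1} ∨
    (N : Set Poincare) = {g : Poincare | g.right = 1 ∨ g.right = negOne} ∨
    N = ⊤ := by
  exact poincare_closed_normal_subgroups' N hclosed hnormal
end
end
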